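/- Every free group F satisfies ⋂ₙ γₙ(F) = 1, i.e., the intersection of the lower central series of a free group is trivial. -/

import Mathlib

noncomputable section
namespace MagnusProof
open scoped Classical

variable {α : Type*}

/-- Formal power series over the free monoid on `α`, with integer coefficients. -/
structure Mag (α : Type*) where
  coeff : List α → ℤ

namespace Mag

@[ext] theorem ext' {f g : Mag α} (h : ∀ w, f.coeff w = g.coeff w) : f = g := by
  cases f; cases g; simp only [mk.injEq]; funext w; exact h w

instance : Zero (Mag α) := ⟨⟨fun _ => 0⟩⟩
instance : Add (Mag α) := ⟨fun f g => ⟨fun w => f.coeff w + g.coeff w⟩⟩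
instance : Neg (Mag α) := ⟨fun f => ⟨fun w => -f.coeff w⟩⟩
instance : Sub (Mag α) := ⟨fun f g => ⟨fun w => f.coeff w - g.coeff w⟩⟩

@[simp] theorem coeff_zero (w : List α) : (0 : Mag α).coeff w = 0 := rfl
@[simp] theorem coeff_add (f g : Mag α) (w) : (f + g).coeff w = f.coeff w + g.coeff w := rfl
@[simp] theorem coeff_neg (f : Mag α) (w) : (-f).coeff w = -f.coeff w := rfl
@[simp] theorem coeff_sub (f g : Mag α) (w) : (f - g).coeff w = f.coeff w - g.coeff w := rfl

instance : AddCommGroup (Mag α) where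
  add_assoc f g h := by ext w; simp [add_assoc]
  zero_add f := by ext w; simp
  add_zero f := by ext w; simp
  add_comm f g := by ext w; simp [add_comm]
  neg_add_cancel f := by ext w; simp
  sub_eq_add_neg f g := by ext w; simp [sub_eq_add_neg]
  nsmul := nsmulRec
  zsmul := zsmulRec

instance : One (Mag α) := ⟨⟨fun w => if w = [] then 1 else 0⟩⟩
instance : Mul (Mag α) :=
  ⟨fun f g => ⟨fun w => ∑ k ∈ Finset.range (w.length + 1), f.coeff (w.take k) * g.coeff (w.drop k)⟩⟩

theorem coeff_one (w : List α) : (1 : Mag α).coeff w = if w = [] then 1 else 0 := rfl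
@[simp] theorem coeff_one_nil : (1 : Mag α).coeff [] = 1 := by rw [coeff_one]; simp
theorem coeff_one_ne {w : List α} (h : w ≠ []) : (1 : Mag α).coeff w = 0 := by rw [coeff_one]; simp [h]

theorem coeff_mul (f g : Mag α) (w : List α) :
    (f * g).coeff w = ∑ k ∈ Finset.range (w.length + 1), f.coeff (w.take k) * g.coeff (w.drop k) :=
  rfl

@[simp] theorem coeff_mul_nil (f g : Mag α) : (f * g).coeff [] = f.coeff [] * g.coeff [] := by
  simp [coeff_mul]

/-- left shift -/
def sh (a : α) (f : Mag α) : Mag α := ⟨fun w => f.coeff (a :: w)⟩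

@[simp] theorem coeff_sh (a : α) (f : Mag α) (w) : (sh a f).coeff w = f.coeff (a :: w) := rfl

theorem coeff_mul_cons (f g : Mag α) (a : α) (w : List α) :
    (f * g).coeff (a :: w) = f.coeff [] * g.coeff (a :: w) + ((sh a f) * g).coeff w := by
  rw [coeff_mul, coeff_mul]
  rw [show (a :: w).length + 1 = w.length + 1 + 1 from rfl, Finset.sum_range_succ']
  simp only [List.take_succ_cons, List.drop_succ_cons, List.take_zero, List.drop_zero, coeff_sh]
  ring

/-- right shift -/
def sh' (a : α) (g : Mag α) : Mag α := ⟨fun w => g.coeff (w ++ [a])⟩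

@[simp] theorem coeff_sh' (a : α) (g : Mag α) (w) : (sh' a g).coeff w = g.coeff (w ++ [a]) := rfl

theorem coeff_mul_concat (f g : Mag α) (a : α) (w : List α) :
    (f * g).coeff (w ++ [a]) = (f * sh' a g).coeff w + f.coeff (w ++ [a]) * g.coeff [] := by
  rw [coeff_mul, coeff_mul]
  rw [show (w ++ [a]).length + 1 = (w.length + 1) + 1 by simp, Finset.sum_range_succ]
  congr 1
  · apply Finset.sum_congr rfl
    intro k hk
    rw [Finset.mem_range] at hk
    have hk' : k ≤ w.length := Nat.lt_succ_iff.mp hk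
    rw [List.take_append_of_le_length hk', List.drop_append_of_le_length hk', coeff_sh']
  · rw [List.take_of_length_le (by simp), List.drop_of_length_le (by simp)]


/-- constant series -/
def cns (c : ℤ) : Mag α := ⟨fun w => if w = [] then c else 0⟩

@[simp] theorem coeff_cns_nil (c : ℤ) : (cns c : Mag α).coeff [] = c := by simp [cns]
theorem coeff_cns_ne (c : ℤ) {w : List α} (h : w ≠ []) : (cns c : Mag α).coeff w = 0 := by
  simp [cns, h]

theorem one_eq_cns : (1 : Mag α) = cns 1 := rfl

theorem coeff_cns_mul (c : ℤ) (g : Mag α) (w : List α) :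
    (cns c * g).coeff w = c * g.coeff w := by
  rw [coeff_mul]
  rcases w with _ | ⟨a, w⟩
  · simp
  · rw [Finset.sum_eq_single 0]
    · simp
    · intro k hk hk0
      have : (a :: w).take k ≠ [] := by
        cases k with
        | zero => exact absurd rfl hk0
        | succ k => simp
      rw [coeff_cns_ne _ this, zero_mul]
    · intro h; simp at h

theorem coeff_mul_cns (f : Mag α) (c : ℤ) (w : List α) :
    (f * cns c).coeff w = f.coeff w * c := by
  rw [coeff_mul, Finset.sum_eq_single w.length]
  · simp
  · intro k hk hkn
    rw [Finset.mem_range, Nat.lt_succ_iff] at hk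
    have : w.drop k ≠ [] := by
      intro h
      rw [List.drop_eq_nil_iff] at h
      omega
    rw [coeff_cns_ne _ this, mul_zero]
  · intro h; simp at h

protected theorem left_distrib (f g h : Mag α) : f * (g + h) = f * g + f * h := by
  ext w
  simp [coeff_mul, mul_add, Finset.sum_add_distrib]

protected theorem right_distrib (f g h : Mag α) : (f + g) * h = f * h + g * h := by
  ext w
  simp [coeff_mul, add_mul, Finset.sum_add_distrib]

protected theorem zero_mul (f : Mag α) : (0 : Mag α) * f = 0 := by
  ext w; simp [coeff_mul]

protected theorem mul_zero (f : Mag α) : f * (0 : Mag α) = 0 := by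
  ext w; simp [coeff_mul]

protected theorem one_mul (f : Mag α) : (1 : Mag α) * f = f := by
  ext w; rw [one_eq_cns, coeff_cns_mul, one_mul]

protected theorem mul_one (f : Mag α) : f * (1 : Mag α) = f := by
  ext w; rw [one_eq_cns, coeff_mul_cns, mul_one]

theorem sh_mul (a : α) (f g : Mag α) :
    sh a (f * g) = cns (f.coeff []) * sh a g + (sh a f) * g := by
  ext w
  rw [coeff_sh, coeff_mul_cons, coeff_add, coeff_cns_mul, coeff_sh]

theorem coeff_cns_mul_mul (c : ℤ) (p q : Mag α) (w : List α) :
    ((cns c * p) * q).coeff w = c * (p * q).coeff w := by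
  rw [coeff_mul, coeff_mul, Finset.mul_sum]
  apply Finset.sum_congr rfl
  intro k _
  rw [coeff_cns_mul, mul_assoc]

protected theorem mul_assoc (f g h : Mag α) : f * g * h = f * (g * h) := by
  ext w
  induction w generalizing f g h with
  | nil => simp [mul_assoc]
  | cons a w ih =>
    rw [coeff_mul_cons, coeff_mul_cons, coeff_mul_nil, sh_mul, Mag.right_distrib, coeff_add,
      coeff_cns_mul_mul, coeff_mul_cons, ih (sh a f) g h]
    ring

instance : Ring (Mag α) where
  __ := (inferInstance : AddCommGroup (Mag α))
  left_distrib := Mag.left_distrib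
  right_distrib := Mag.right_distrib
  zero_mul := Mag.zero_mul
  mul_zero := Mag.mul_zero
  mul_assoc := Mag.mul_assoc
  one_mul := Mag.one_mul
  mul_one := Mag.mul_one


/-- the generator series -/
def X (a : α) : Mag α := ⟨fun w => if w = [a] then 1 else 0⟩

@[simp] theorem coeff_X_single (a : α) : (X a).coeff [a] = 1 := by simp [X]
theorem coeff_X (a : α) (w) : (X a).coeff w = if w = [a] then 1 else 0 := rfl

/-- the inverse of `1 + X a` -/
def Vinv (a : α) : Mag α := ⟨fun w => if ∀ x ∈ w, x = a then (-1) ^ w.length else 0⟩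

theorem coeff_Vinv (a : α) (w) :
    (Vinv a).coeff w = if ∀ x ∈ w, x = a then (-1 : ℤ) ^ w.length else 0 := rfl

@[simp] theorem coeff_Vinv_nil (a : α) : (Vinv a).coeff [] = 1 := by simp [coeff_Vinv]

@[simp] theorem coeff_X_mul_nil (a : α) (g : Mag α) : (X a * g).coeff [] = 0 := by
  rw [coeff_mul_nil]; simp [X]

theorem coeff_X_mul (a : α) (g : Mag α) (b : α) (w' : List α) :
    (X a * g).coeff (b :: w') = if b = a then g.coeff w' else 0 := by
  · rw [coeff_mul_cons]
    have h1 : (X a).coeff [] = 0 := by simp [X]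
    have h2 : sh b (X a) = cns (if b = a then 1 else 0) := by
      ext v
      rcases v with _ | ⟨c, v⟩
      · by_cases hba : b = a <;> simp [coeff_X, cns, hba]
      · rw [coeff_cns_ne _ (by simp)]
        simp [coeff_X]
    rw [h1, zero_mul, zero_add, h2, coeff_cns_mul]
    by_cases hba : b = a <;> simp [hba]

theorem coeff_mul_X (a : α) (f : Mag α) (w : List α) (b : α) :
    (f * X a).coeff (w ++ [b]) = if b = a then f.coeff w else 0 := by
  rw [coeff_mul_concat]
  have h1 : (X a).coeff [] = 0 := by simp [X]
  have h2 : sh' b (X a) = cns (if b = a then 1 else 0) := by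
    ext v
    rcases v with _ | ⟨c, v⟩
    · simp only [coeff_sh', List.nil_append, coeff_X, coeff_cns_nil]
      by_cases hba : b = a <;> simp [hba]
    · rw [coeff_cns_ne _ (by simp), coeff_sh', coeff_X, if_neg]
      simp
  rw [h1, mul_zero, add_zero, h2, coeff_mul_cns]
  by_cases hba : b = a <;> simp [hba]

@[simp] theorem coeff_mul_X_nil (a : α) (f : Mag α) : (f * X a).coeff [] = 0 := by
  rw [coeff_mul_nil]; simp [X]

theorem one_add_X_mul_Vinv (a : α) : (1 + X a) * Vinv a = 1 := by
  ext w
  rw [Mag.right_distrib, coeff_add, Mag.one_mul]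
  rcases w with _ | ⟨b, w'⟩
  · simp [coeff_X]
  · rw [coeff_one_ne (by simp), coeff_X_mul]
    by_cases hall : ∀ x ∈ b :: w', x = a
    · have hb : b = a := hall b (by simp)
      have hw' : ∀ x ∈ w', x = a := fun x hx => hall x (by simp [hx])
      rw [coeff_Vinv, if_pos hall, coeff_Vinv, if_pos hw', if_pos hb]
      simp [pow_succ]
    · rw [coeff_Vinv, if_neg hall]
      by_cases hb : b = a
      · have hw' : ¬ ∀ x ∈ w', x = a := by
          intro h
          apply hall
          intro x hx
          rcases List.mem_cons.mp hx with h'|h'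
          · rw [h', hb]
          · exact h x h'
        rw [if_pos hb, coeff_Vinv, if_neg hw']
        simp
      · simp [hb]

theorem Vinv_mul_one_add_X (a : α) : Vinv a * (1 + X a) = 1 := by
  ext w
  rw [Mag.left_distrib, coeff_add, Mag.mul_one]
  induction w using List.reverseRecOn with
  | nil => simp [X]
  | append_singleton w' b _ =>
    rw [coeff_mul_X, coeff_one_ne (by simp)]
    by_cases hall : ∀ x ∈ w' ++ [b], x = a
    · have hb : b = a := hall b (by simp)
      have hw' : ∀ x ∈ w', x = a := fun x hx => hall x (by simp [hx])
      rw [coeff_Vinv, if_pos hall, if_pos hb, coeff_Vinv, if_pos hw']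
      simp [pow_succ]
    · rw [coeff_Vinv, if_neg hall]
      by_cases hb : b = a
      · have hw' : ¬ ∀ x ∈ w', x = a := by
          intro h; exact hall (by
            intro x hx
            rcases List.mem_append.mp hx with h'|h'
            · exact h x h'
            · simp at h'; rw [h', hb])
        rw [if_pos hb, coeff_Vinv, if_neg hw']
        simp
      · simp [hb]

/-- the Magnus unit `1 + X a`. -/
def U (a : α) : (Mag α)ˣ where
  val := 1 + X a
  inv := Vinv a
  val_inv := one_add_X_mul_Vinv a
  inv_val := Vinv_mul_one_add_X a

@[simp] theorem U_val (a : α) : ((U a : (Mag α)ˣ) : Mag α) = 1 + X a := rfl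
@[simp] theorem U_inv_val (a : α) : (((U a)⁻¹ : (Mag α)ˣ) : Mag α) = Vinv a := rfl


theorem coeff_mul_eq_zero_of_bad {a : α} {A B : Mag α}
    (hA : ∀ v, (∃ x ∈ v, x ≠ a) → A.coeff v = 0)
    (hB : ∀ v, (∃ x ∈ v, x ≠ a) → B.coeff v = 0)
    (w : List α) (hw : ∃ x ∈ w, x ≠ a) : (A * B).coeff w = 0 := by
  rw [coeff_mul]
  apply Finset.sum_eq_zero
  intro k _
  by_cases h : ∃ x ∈ w.take k, x ≠ a
  · rw [hA _ h, zero_mul]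
  · push_neg at h
    have hd : ∃ x ∈ w.drop k, x ≠ a := by
      obtain ⟨x, hx, hxa⟩ := hw
      rw [← List.take_append_drop k w] at hx
      rcases List.mem_append.mp hx with h' | h'
      · exact absurd (h x h') hxa
      · exact ⟨x, h', hxa⟩
    rw [hB _ hd, mul_zero]

theorem coeff_one_add_X_bad (a : α) (v : List α) (hv : ∃ x ∈ v, x ≠ a) :
    ((1 : Mag α) + X a).coeff v = 0 := by
  obtain ⟨x, hx, hxa⟩ := hv
  have h1 : v ≠ [] := by rintro rfl; simp at hx
  have h2 : v ≠ [a] := by rintro rfl; simp at hx; exact hxa hx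
  rw [coeff_add, coeff_one_ne h1, coeff_X, if_neg h2, add_zero]

theorem coeff_Vinv_bad (a : α) (v : List α) (hv : ∃ x ∈ v, x ≠ a) :
    (Vinv a).coeff v = 0 := by
  obtain ⟨x, hx, hxa⟩ := hv
  rw [coeff_Vinv, if_neg]
  intro h
  exact hxa (h x hx)

theorem U_zpow_spec (a : α) (m : ℤ) :
    ((U a ^ m : (Mag α)ˣ) : Mag α).coeff [] = 1 ∧
    ((U a ^ m : (Mag α)ˣ) : Mag α).coeff [a] = m ∧
    ∀ w, (∃ x ∈ w, x ≠ a) → ((U a ^ m : (Mag α)ˣ) : Mag α).coeff w = 0 := by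
  induction m using Int.induction_on with
  | zero => refine ⟨rfl, by simp [coeff_one], fun w hw => ?_⟩
            obtain ⟨x, hx, _⟩ := hw
            exact coeff_one_ne (by rintro rfl; simp at hx)
  | succ i ih =>
    obtain ⟨h0, h1, hbad⟩ := ih
    rw [zpow_add_one]
    constructor
    · rw [Units.val_mul, U_val, Mag.left_distrib, coeff_add, Mag.mul_one, coeff_mul_X_nil,
        add_zero, h0]
    constructor
    · rw [Units.val_mul, U_val, Mag.left_distrib, coeff_add, Mag.mul_one, h1,
        show [a] = [] ++ [a] from rfl, coeff_mul_X, if_pos rfl, h0]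
    · intro w hw
      rw [Units.val_mul, U_val]
      exact coeff_mul_eq_zero_of_bad hbad (coeff_one_add_X_bad a) w hw
  | pred i ih =>
    obtain ⟨h0, h1, hbad⟩ := ih
    rw [show (-(i:ℤ) - 1) = -(i:ℤ) - 1 from rfl, zpow_sub_one]
    constructor
    · rw [Units.val_mul, U_inv_val, coeff_mul_nil, h0, coeff_Vinv_nil, one_mul]
    constructor
    · rw [Units.val_mul, U_inv_val, show ([a] : List α) = a :: [] from rfl, coeff_mul_cons,
        coeff_mul_nil, coeff_sh, h0]
      have : (Vinv a).coeff [a] = -1 := by rw [coeff_Vinv]; simp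
      rw [this, coeff_Vinv_nil]
      have h1' : ((U a ^ (-(i:ℤ)) : (Mag α)ˣ) : Mag α).coeff [a] = -(i:ℤ) := h1
      rw [h1']
      ring
    · intro w hw
      rw [Units.val_mul, U_inv_val]
      exact coeff_mul_eq_zero_of_bad hbad (coeff_Vinv_bad a) w hw


/-- number of maximal runs in a list -/
def runs : List α → ℕ
  | [] => 0
  | [_] => 1
  | a :: b :: l => (if a = b then 0 else 1) + runs (b :: l)

@[simp] theorem runs_nil : runs ([] : List α) = 0 := rfl
@[simp] theorem runs_singleton (a : α) : runs [a] = 1 := rfl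
theorem runs_cons_cons (a b : α) (l : List α) :
    runs (a :: b :: l) = (if a = b then 0 else 1) + runs (b :: l) := rfl

theorem runs_cons_le (a : α) (v : List α) : runs (a :: v) ≤ 1 + runs v := by
  cases v with
  | nil => simp
  | cons b l => rw [runs_cons_cons]; split <;> omega

theorem runs_cons_pos (a : α) (v : List α) : 1 ≤ runs (a :: v) := by
  induction v generalizing a with
  | nil => simp
  | cons b l ih => rw [runs_cons_cons]; have := ih b; omega

theorem runs_append_le (u v : List α) : runs (u ++ v) ≤ runs u + runs v := by
  induction u with
  | nil => simp
  | cons a u ih =>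
    cases u with
    | nil => simpa using runs_cons_le a v
    | cons b u' =>
      rw [List.cons_append, List.cons_append, runs_cons_cons, runs_cons_cons,
        ← List.cons_append]
      split <;> omega

theorem runs_le_one_of_all {a : α} {v : List α} (h : ∀ x ∈ v, x = a) : runs v ≤ 1 := by
  induction v with
  | nil => simp
  | cons b l ih =>
    cases l with
    | nil => simp
    | cons c l' =>
      rw [runs_cons_cons]
      have hb : b = a := h b (by simp)
      have hc : c = a := h c (by simp)
      have : runs (c :: l') ≤ 1 := ih (fun x hx => h x (by simp [List.mem_cons] at hx ⊢; tauto))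
      rw [if_pos (hb.trans hc.symm)]
      omega

theorem runs_cons_of_ne_head (a : α) (v : List α)
    (h : ∀ b l, v = b :: l → b ≠ a) : runs (a :: v) = 1 + runs v := by
  cases v with
  | nil => simp
  | cons b l =>
    rw [runs_cons_cons, if_neg]
    exact fun hab => h b l rfl (by rw [← hab])

/-- the product of units attached to a syllable list -/
def sylProd : List (α × ℤ) → (Mag α)ˣ
  | [] => 1
  | (a, m) :: S => U a ^ m * sylProd S

@[simp] theorem sylProd_nil : sylProd ([] : List (α × ℤ)) = 1 := rfl
@[simp] theorem sylProd_cons (a : α) (m : ℤ) (S : List (α × ℤ)) :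
    sylProd ((a, m) :: S) = U a ^ m * sylProd S := rfl

theorem coeff_sylProd_eq_zero (S : List (α × ℤ)) (v : List α)
    (h : S.length < runs v) : ((sylProd S : (Mag α)ˣ) : Mag α).coeff v = 0 := by
  induction S generalizing v with
  | nil =>
    simp only [List.length_nil] at h
    have : v ≠ [] := by rintro rfl; simp at h
    simpa using coeff_one_ne this
  | cons p S ih =>
    obtain ⟨c, m⟩ := p
    rw [sylProd_cons, Units.val_mul, coeff_mul]
    apply Finset.sum_eq_zero
    intro k _
    by_cases hbad : ∃ x ∈ v.take k, x ≠ c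
    · rw [(U_zpow_spec c m).2.2 _ hbad, zero_mul]
    · push_neg at hbad
      have h1 : runs (v.take k) ≤ 1 := runs_le_one_of_all hbad
      have h2 : runs v ≤ runs (v.take k) + runs (v.drop k) := by
        conv_lhs => rw [← List.take_append_drop k v]
        exact runs_append_le _ _
      have h3 : S.length < runs (v.drop k) := by
        simp only [List.length_cons] at h
        omega
      rw [ih _ h3, mul_zero]

theorem runs_map_eq_length (S : List (α × ℤ)) (h : S.Chain' (fun p q => p.1 ≠ q.1)) :
    runs (S.map Prod.fst) = S.length := by
  induction S with
  | nil => simp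
  | cons q S' ih =>
    rw [List.map_cons]
    have h' := h.tail
    rw [runs_cons_of_ne_head, ih h']
    · simp [add_comm]
    · intro b l hbl
      cases S' with
      | nil => simp at hbl
      | cons r S'' =>
        simp only [List.map_cons, List.cons.injEq] at hbl
        rw [← hbl.1]
        exact (List.isChain_cons_cons.mp h).1.symm

theorem coeff_sylProd_letters (S : List (α × ℤ))
    (hchain : S.Chain' (fun p q => p.1 ≠ q.1)) :
    ((sylProd S : (Mag α)ˣ) : Mag α).coeff (S.map Prod.fst) = (S.map Prod.snd).prod := by
  induction S with
  | nil => simp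
  | cons p S ih =>
    obtain ⟨c, m⟩ := p
    have hchain' : S.Chain' (fun p q => p.1 ≠ q.1) := hchain.tail
    rw [sylProd_cons, Units.val_mul, List.map_cons, coeff_mul_cons, List.map_cons,
      List.prod_cons]
    have hz : ((sylProd S : (Mag α)ˣ) : Mag α).coeff (c :: S.map Prod.fst) = 0 := by
      apply coeff_sylProd_eq_zero
      have hrv : runs (c :: S.map Prod.fst) = 1 + runs (S.map Prod.fst) := by
        apply runs_cons_of_ne_head
        intro b l hbl
        cases S with
        | nil => simp at hbl
        | cons q S' =>
          simp only [List.map_cons, List.cons.injEq] at hbl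
          have := List.isChain_cons_cons.mp hchain
          rw [← hbl.1]
          exact this.1.symm
      rw [hrv, runs_map_eq_length S hchain']
      omega
    rw [hz, mul_zero, zero_add, coeff_mul, Finset.sum_eq_single 0]
    · simp only [List.take_zero, List.drop_zero, coeff_sh]
      rw [show (c :: ([] : List α)) = [c] from rfl, (U_zpow_spec c m).2.1, ih hchain']
    · intro k hk hk0
      cases S with
      | nil =>
        simp only [List.map_nil, List.length_nil, Finset.mem_range] at hk
        omega
      | cons q S' =>
        have hq : q.1 ≠ c := by
          have := List.isChain_cons_cons.mp hchain
          exact this.1.symm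
        have hbad : ∃ x ∈ c :: ((q :: S').map Prod.fst).take k, x ≠ c := by
          refine ⟨q.1, ?_, hq⟩
          rcases k with _ | k
          · exact absurd rfl hk0
          · simp [List.take_succ_cons]
        rw [coeff_sh, (U_zpow_spec c m).2.2 _ hbad, zero_mul]
    · intro h
      simp at h


/-- exponent of a letter -/
def e (b : Bool) : ℤ := if b then 1 else -1

@[simp] theorem e_true : e true = 1 := rfl
@[simp] theorem e_false : e false = -1 := rfl
theorem e_ne_zero (b : Bool) : e b ≠ 0 := by cases b <;> simp
theorem e_pos_iff (b : Bool) : 0 < e b ↔ b = true := by cases b <;> simp [e]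

/-- collect a word into syllables -/
def syl : List (α × Bool) → List (α × ℤ)
  | [] => []
  | (a, b) :: L =>
    match syl L with
    | [] => [(a, e b)]
    | (c, m) :: S => if a = c then (c, m + e b) :: S else (a, e b) :: (c, m) :: S

@[simp] theorem syl_nil : syl ([] : List (α × Bool)) = [] := rfl

theorem syl_cons (a : α) (b : Bool) (L : List (α × Bool)) :
    syl ((a, b) :: L) = match syl L with
      | [] => [(a, e b)]
      | (c, m) :: S => if a = c then (c, m + e b) :: S else (a, e b) :: (c, m) :: S := rfl

theorem syl_cons_nil (a : α) (b : Bool) {L : List (α × Bool)} (h : syl L = []) :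
    syl ((a, b) :: L) = [(a, e b)] := by
  rw [syl_cons, h]

theorem syl_cons_cons (a : α) (b : Bool) {L : List (α × Bool)} {c m S}
    (h : syl L = (c, m) :: S) :
    syl ((a, b) :: L) = if a = c then (c, m + e b) :: S else (a, e b) :: (c, m) :: S := by
  rw [syl_cons, h]

theorem U_zpow_e (a : α) (b : Bool) : U a ^ e b = cond b (U a) (U a)⁻¹ := by
  cases b <;> simp [e]

theorem sylProd_syl (L : List (α × Bool)) :
    sylProd (syl L) = (L.map fun x => cond x.2 (U x.1) (U x.1)⁻¹).prod := by
  induction L with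
  | nil => simp
  | cons p L ih =>
    obtain ⟨a, b⟩ := p
    rw [List.map_cons, List.prod_cons, ← ih, ← U_zpow_e]
    show sylProd (syl ((a, b) :: L)) = U a ^ e b * sylProd (syl L)
    rcases hS : syl L with _ | ⟨⟨c, m⟩, S⟩
    · rw [syl_cons_nil a b hS]
      simp
    · rw [syl_cons_cons a b hS]
      by_cases hac : a = c
      · subst hac
        rw [if_pos rfl, sylProd_cons, sylProd_cons, add_comm m (e b), zpow_add, mul_assoc]
      · rw [if_neg hac, sylProd_cons]

/-- no-cancellation predicate for words -/
def NoCancel (L : List (α × Bool)) : Prop :=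
  List.Chain' (fun p q => ¬(p.1 = q.1 ∧ p.2 = !q.2)) L

theorem syl_spec : ∀ L : List (α × Bool), NoCancel L →
    (syl L).Chain' (fun p q => p.1 ≠ q.1) ∧ (∀ p ∈ syl L, p.2 ≠ 0) ∧
    (∀ a b L', L = (a, b) :: L' →
      ∃ m S, syl L = (a, m) :: S ∧ (0 < m ↔ b = true) ∧ m ≠ 0) := by
  intro L
  induction L with
  | nil =>
    intro _
    refine ⟨List.isChain_nil, by simp, ?_⟩
    intro a b L' h
    simp at h
  | cons p L ih =>
    obtain ⟨a, b⟩ := p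
    intro hnc
    have hnc' : NoCancel L := hnc.tail
    obtain ⟨ih1, ih2, ih3⟩ := ih hnc'
    rcases hS : syl L with _ | ⟨⟨c, m⟩, S⟩
    · have hL : L = [] := by
        cases L with
        | nil => rfl
        | cons q L'' =>
          obtain ⟨m, S, hqS, _⟩ := ih3 q.1 q.2 L'' (by rw [Prod.mk.eta])
          rw [hqS] at hS
          simp at hS
      subst hL
      have hsyl : syl [(a, b)] = [(a, e b)] := rfl
      refine ⟨by rw [hsyl]; exact List.isChain_singleton _, by rw [hsyl]; simp [e_ne_zero], ?_⟩
      intro a' b' L' h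
      simp only [List.cons.injEq, Prod.mk.injEq] at h
      obtain ⟨⟨rfl, rfl⟩, rfl⟩ := h
      exact ⟨e b, [], hsyl, e_pos_iff b, e_ne_zero b⟩
    · -- L is nonempty
      obtain ⟨⟨a', b'⟩, L'', rfl⟩ : ∃ q L'', L = q :: L'' := by
        cases L with
        | nil => simp at hS
        | cons q L'' => exact ⟨q, L'', rfl⟩
      obtain ⟨m', S', hqS, hsign, hm'⟩ := ih3 a' b' L'' rfl
      have hstep : syl ((a, b) :: (a', b') :: L'') =
          if a = a' then (a', m' + e b) :: S' else (a, e b) :: (a', m') :: S' :=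
        syl_cons_cons a b hqS
      by_cases hac : a = a'
      · -- merge case; signs must agree by no-cancellation
        have hb : b = b' := by
          have hhead := (List.isChain_cons_cons.mp hnc).1
          by_contra hbq
          exact hhead ⟨hac, by cases b <;> cases b' <;> simp_all⟩
        have key : (0 < m' + e b ↔ b = true) ∧ m' + e b ≠ 0 := by
          subst hb
          cases b with
          | true => have := hsign.mpr rfl
                    refine ⟨⟨fun _ => rfl, fun _ => by simp only [e_true]; omega⟩, ?_⟩
                    simp only [e_true]; omega
          | false =>
            have h1 : ¬ (0 < m') := by rw [hsign]; simp
            refine ⟨⟨fun h2 => by simp only [e_false] at h2; omega, fun h2 => by simp at h2⟩, ?_⟩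
            simp only [e_false]; omega
        rw [hstep, if_pos hac]
        rw [hqS] at ih1
        refine ⟨?_, ?_, ?_⟩
        · exact List.isChain_cons.mpr ⟨fun y hy => (List.isChain_cons.mp ih1).1 y hy,
            (List.isChain_cons.mp ih1).2⟩
        · intro p hp
          rcases List.mem_cons.mp hp with rfl | hp'
          · exact key.2
          · exact ih2 p (by rw [hqS]; exact List.mem_cons_of_mem _ hp')
        · intro a₀ b₀ L₀ h
          simp only [List.cons.injEq, Prod.mk.injEq] at h
          obtain ⟨⟨rfl, rfl⟩, rfl⟩ := h
          exact ⟨m' + e b, S', by rw [hac], key.1, key.2⟩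
      · rw [hstep, if_neg hac]
        rw [hqS] at ih1
        refine ⟨?_, ?_, ?_⟩
        · exact List.isChain_cons_cons.mpr ⟨hac, ih1⟩
        · intro p hp
          rcases List.mem_cons.mp hp with rfl | hp'
          · exact e_ne_zero b
          · exact ih2 p (by rw [hqS]; exact hp')
        · intro a₀ b₀ L₀ h
          simp only [List.cons.injEq, Prod.mk.injEq] at h
          obtain ⟨⟨rfl, rfl⟩, rfl⟩ := h
          exact ⟨e b, (a', m') :: S', rfl, e_pos_iff b, e_ne_zero b⟩


/-- order filtration predicate: all coefficients in degree `< n` vanish -/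
def J (n : ℕ) (x : Mag α) : Prop := ∀ w : List α, w.length < n → x.coeff w = 0

theorem J_zero (x : Mag α) : J 0 x := fun _ hw => absurd hw (by omega)

theorem J_mono {m n : ℕ} (h : m ≤ n) {x : Mag α} (hx : J n x) : J m x :=
  fun w hw => hx w (by omega)

theorem J_add {n : ℕ} {x y : Mag α} (hx : J n x) (hy : J n y) : J n (x + y) :=
  fun w hw => by rw [coeff_add, hx w hw, hy w hw, add_zero]

theorem J_neg {n : ℕ} {x : Mag α} (hx : J n x) : J n (-x) :=
  fun w hw => by rw [coeff_neg, hx w hw, neg_zero]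

theorem J_sub {n : ℕ} {x y : Mag α} (hx : J n x) (hy : J n y) : J n (x - y) :=
  fun w hw => by rw [coeff_sub, hx w hw, hy w hw, sub_zero]

theorem J_mul {m n : ℕ} {x y : Mag α} (hx : J m x) (hy : J n y) : J (m + n) (x * y) := by
  intro w hw
  rw [coeff_mul]
  apply Finset.sum_eq_zero
  intro k _
  by_cases hk : (w.take k).length < m
  · rw [hx _ hk, zero_mul]
  · have h1 : (w.take k).length = min k w.length := by simp
    have h2 : (w.drop k).length = w.length - k := by simp
    have : (w.drop k).length < n := by omega
    rw [hy _ this, mul_zero]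

theorem J_mul_left (x : Mag α) {n : ℕ} {y : Mag α} (hy : J n y) : J n (x * y) := by
  have := J_mul (J_zero x) hy
  rwa [zero_add] at this

theorem J_mul_right {n : ℕ} {x : Mag α} (hx : J n x) (y : Mag α) : J n (x * y) := by
  have := J_mul hx (J_zero y)
  rwa [add_zero] at this

/-- the congruence subgroups of the Magnus filtration -/
def D (α : Type*) (n : ℕ) : Subgroup (Mag α)ˣ where
  carrier := {u | J n ((u : Mag α) - 1)}
  one_mem' := by
    intro w hw
    simp
  mul_mem' := by
    intro u v hu hv
    have key : ((u * v : (Mag α)ˣ) : Mag α) - 1 =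
        ((u : Mag α) - 1) * ((v : Mag α) - 1) + (((u : Mag α) - 1) + ((v : Mag α) - 1)) := by
      rw [Units.val_mul]; noncomm_ring
    show J n _
    rw [key]
    exact J_add (J_mono (Nat.le_add_right n n) (J_mul hu hv)) (J_add hu hv)
  inv_mem' := by
    intro u hu
    have key : ((u⁻¹ : (Mag α)ˣ) : Mag α) - 1 =
        ((u⁻¹ : (Mag α)ˣ) : Mag α) * (-((u : Mag α) - 1)) := by
      have h1 : ((u⁻¹ : (Mag α)ˣ) : Mag α) * (u : Mag α) = 1 := by
        rw [← Units.val_mul, inv_mul_cancel, Units.val_one]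
      rw [neg_sub, mul_sub, h1, mul_one]
    show J n _
    rw [key]
    exact J_mul_left _ (J_neg hu)

theorem mem_D_iff {n : ℕ} {u : (Mag α)ˣ} : u ∈ D α n ↔ J n ((u : Mag α) - 1) := Iff.rfl

open scoped commutatorElement in
theorem commutator_mem_D {m n : ℕ} {u v : (Mag α)ˣ} (hu : u ∈ D α m) (hv : v ∈ D α n) :
    ⁅u, v⁆ ∈ D α (m + n) := by
  set A : Mag α := (u : Mag α)
  set B : Mag α := (v : Mag α)
  set A' : Mag α := ((u⁻¹ : (Mag α)ˣ) : Mag α)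
  set B' : Mag α := ((v⁻¹ : (Mag α)ˣ) : Mag α)
  have h1 : A * A' = 1 := by rw [← Units.val_mul, mul_inv_cancel, Units.val_one]
  have h2 : B * B' = 1 := by rw [← Units.val_mul, mul_inv_cancel, Units.val_one]
  have key : ((⁅u, v⁆ : (Mag α)ˣ) : Mag α) - 1 =
      ((A - 1) * (B - 1) - (B - 1) * (A - 1)) * (A' * B') := by
    have hc : ((⁅u, v⁆ : (Mag α)ˣ) : Mag α) = A * (B * (A' * B')) := by
      rw [commutatorElement_def]
      simp only [Units.val_mul, mul_assoc]
      rfl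
    have hexp : (A - 1) * (B - 1) - (B - 1) * (A - 1) = A * B - B * A := by noncomm_ring
    rw [hc, hexp, sub_mul]
    have hBA : B * A * (A' * B') = 1 := by
      rw [mul_assoc, ← mul_assoc A A' B', h1, one_mul, h2]
    have hAB : A * B * (A' * B') = A * (B * (A' * B')) := by rw [mul_assoc]
    rw [hAB, hBA]
  show J (m + n) _
  rw [key]
  apply J_mul_right
  exact J_sub (J_mul hu hv) (J_mono (le_of_eq (Nat.add_comm m n)) (J_mul hv hu))

/-- the Magnus morphism -/
def phi (α : Type*) : FreeGroup α →* (Mag α)ˣ := FreeGroup.lift (fun a => U a)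

theorem phi_of (a : α) : phi α (FreeGroup.of a) = U a := FreeGroup.lift_apply_of

theorem phi_mem_D_one (g : FreeGroup α) : phi α g ∈ D α 1 := by
  induction g using FreeGroup.induction_on with
  | C1 => rw [map_one]; exact one_mem _
  | of x =>
    rw [phi_of]
    intro w hw
    have : w = [] := by
      cases w with
      | nil => rfl
      | cons a l => simp at hw
    subst this
    simp [coeff_X]
  | inv_of x ih =>
    rw [map_inv]
    exact inv_mem ih
  | mul x y ihx ihy =>
    rw [map_mul]
    exact mul_mem ihx ihy

theorem lcs_le_comap_D (n : ℕ) :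
    Subgroup.lowerCentralSeries (⊤ : Subgroup (FreeGroup α)) n ≤ (D α n).comap (phi α) := by
  induction n with
  | zero =>
    intro g _
    exact fun w hw => absurd hw (by omega)
  | succ n ih =>
    show ⁅Subgroup.lowerCentralSeries (⊤ : Subgroup (FreeGroup α)) n, (⊤ : Subgroup (FreeGroup α))⁆ ≤ _
    rw [Subgroup.commutator_le]
    intro g hg h _
    rw [Subgroup.mem_comap, map_commutatorElement]
    exact commutator_mem_D (ih hg) (phi_mem_D_one h)

theorem noCancel_of_no_pattern :
    ∀ L : List (α × Bool), (∀ (L₂ L₃ : List (α × Bool)) x b,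
      L ≠ L₂ ++ (x, b) :: (x, !b) :: L₃) → NoCancel L := by
  intro L
  induction L with
  | nil => intro _; exact List.isChain_nil
  | cons p L ih =>
    intro h
    cases L with
    | nil => exact List.isChain_singleton p
    | cons q L' =>
      apply List.isChain_cons_cons.mpr
      constructor
      · rintro ⟨h1, h2⟩
        apply h [] L' p.1 p.2
        have hq : q = (p.1, !p.2) := by
          have : q.2 = !p.2 := by
            cases hb : p.2 <;> cases hb' : q.2 <;> simp_all
          rw [Prod.ext_iff]
          exact ⟨h1.symm, this⟩
        rw [List.nil_append, ← hq, Prod.mk.eta]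
      · apply ih
        intro L₂ L₃ x b hq
        exact h (p :: L₂) L₃ x b (by rw [List.cons_append, ← hq])

theorem noCancel_toWord [DecidableEq α] (g : FreeGroup α) : NoCancel g.toWord := by
  apply noCancel_of_no_pattern
  intro L₂ L₃ x b hpat
  exact FreeGroup.reduce.not ((FreeGroup.reduce_toWord g).trans hpat)

end Mag

end MagnusProof

open MagnusProof MagnusProof.Mag in
/-- The intersection of the lower central series of a free group is trivial. -/
theorem freeGroup_iInf_lowerCentralSeries_eq_bot (α : Type*) :
    ⨅ n : ℕ, Subgroup.lowerCentralSeries (⊤ : Subgroup (FreeGroup α)) n = ⊥ := by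
  classical
  rw [eq_bot_iff]
  intro g hg
  rw [Subgroup.mem_iInf] at hg
  rw [Subgroup.mem_bot]
  by_contra hne
  set L := g.toWord with hLdef
  have hred : NoCancel L := noCancel_toWord g
  have hLne : L ≠ [] := fun h => hne (FreeGroup.toWord_eq_nil_iff.mp h)
  obtain ⟨ih1, ih2, ih3⟩ := syl_spec L hred
  obtain ⟨⟨a, b⟩, L', hL⟩ : ∃ p L', L = p :: L' := by
    cases hL' : L with
    | nil => exact absurd hL' hLne
    | cons p L' => exact ⟨p, L', rfl⟩
  obtain ⟨m, S, hsylL, _, _⟩ := ih3 a b L' hL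
  set w : List α := (syl L).map Prod.fst with hwdef
  have hwne : w ≠ [] := by rw [hwdef, hsylL]; simp
  -- φ g = sylProd (syl L)
  have hphi : phi α g = sylProd (syl L) := by
    rw [sylProd_syl]
    conv_lhs => rw [← FreeGroup.mk_toWord (x := g)]
    exact FreeGroup.lift_mk
  -- the coefficient at `w` vanishes since `g` is in every lower central term
  have hmem : phi α g ∈ D α (w.length + 1) := lcs_le_comap_D _ (hg (w.length + 1))
  have hzero : ((phi α g : (Mag α)ˣ) : Mag α).coeff w = 0 := by
    have h1 := hmem w (by omega)
    rw [coeff_sub, coeff_one_ne hwne, sub_zero] at h1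
    exact h1
  -- but the coefficient is the product of the nonzero syllable exponents
  have hval : ((phi α g : (Mag α)ˣ) : Mag α).coeff w = ((syl L).map Prod.snd).prod := by
    rw [hphi, hwdef]
    exact coeff_sylProd_letters _ ih1
  have hprod : ((syl L).map Prod.snd).prod ≠ 0 := by
    apply List.prod_ne_zero
    intro h0
    obtain ⟨p, hp, hp2⟩ := List.mem_map.mp h0
    exact ih2 p hp hp2
  rw [hval] at hzero
  exact hprod hzero
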